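/- For the sequence (n_k)_{k≥1} of the explicit construction, let a, b ∈ ℕ be such that a/b = 2^r for some r ∈ ℤ \ {0}. Then there is a constant C (depending only on ε, R, d, a, b) such that for every i ≥ 1, every m ∈ {1,…,M(i)}, and c := 2^(2^(i⁴))·b·m·(2^r − 1), one has |#{(k,ℓ) : k,ℓ ∈ Δ_i, a·n_k − b·n_ℓ = c} − (R^i/⌈i^{1−ε}⌉ − r)| ≤ C·i². -/

import Mathlib

set_option maxHeartbeats 1000000


open Real MeasureTheory Filter Finset

noncomputable section

/-- The block `Δ_i` of `R^i` consecutive positive integers. -/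
def Block (R i : ℕ) : Finset ℕ :=
  Finset.Icc ((R ^ i - R) / (R - 1) + 1) ((R ^ (i + 1) - R) / (R - 1))

/-- `M(i) = ⌈i^(1-ε)⌉`. -/
def Mfun (ε : ℝ) (i : ℕ) : ℕ := ⌈(i : ℝ) ^ (1 - ε)⌉₊

/-- The explicit construction: parameters `ε ∈ (0,1)`, an integer `R > 8/ε`, an integer
`d ≥ 1`, for each `i ≥ 1` a partition of `Δ_i` into consecutive intervals of integers
`Δ_i^(1) < ⋯ < Δ_i^(M(i))` (element-wise) of essentially equal cardinality, and the
sequence `n_k := 2^(2^(i^4)) * (2^k + m)` for `k ∈ Δ_i^(m)`. -/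
structure ExplicitConstruction where
  ε : ℝ
  R : ℕ
  d : ℕ
  sub : ℕ → ℕ → Finset ℕ
  n : ℕ → ℕ
  hε : ε ∈ Set.Ioo (0 : ℝ) 1
  hR : 8 / ε < (R : ℝ)
  hd : 1 ≤ d
  hpart : ∀ i, 1 ≤ i → Block R i = (Finset.Icc 1 (Mfun ε i)).biUnion (sub i)
  hconsec : ∀ i, 1 ≤ i → ∀ m ∈ Finset.Icc 1 (Mfun ε i), ∃ lo hi, sub i m = Finset.Icc lo hi
  horder : ∀ i, 1 ≤ i → ∀ m ∈ Finset.Icc 1 (Mfun ε i), ∀ m' ∈ Finset.Icc 1 (Mfun ε i),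
    m < m' → ∀ k ∈ sub i m, ∀ l ∈ sub i m', k < l
  hcard : ∀ i, 1 ≤ i → ∀ m ∈ Finset.Icc 1 (Mfun ε i),
    |((sub i m).card : ℝ) - (R : ℝ) ^ i / (Mfun ε i : ℝ)| ≤ 1
  hn : ∀ i, 1 ≤ i → ∀ m ∈ Finset.Icc 1 (Mfun ε i), ∀ k ∈ sub i m,
    n k = 2 ^ 2 ^ i ^ 4 * (2 ^ k + m)

-- numeric lemmas (proved in s1)
lemma succ_le_threepow (j : ℕ) : j + 1 ≤ 3 ^ j := by
  induction j with
  | zero => norm_num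
  | succ n ih => calc n + 2 ≤ 3 * (n + 1) := by omega
                  _ ≤ 3 * 3 ^ n := Nat.mul_le_mul_left _ ih
                  _ = 3 ^ (n+1) := by ring

lemma sq_le_ninepow (i : ℕ) : i ^ 2 ≤ 9 ^ i := by
  calc i ^ 2 ≤ (i+1) * (i+1) := by nlinarith
    _ ≤ 3 ^ i * 3 ^ i := Nat.mul_le_mul (succ_le_threepow i) (succ_le_threepow i)
    _ = 9 ^ i := by rw [← Nat.mul_pow]

lemma q_dvd (R i : ℕ) (hR : 2 ≤ R) (hi : 1 ≤ i) : (R - 1) ∣ (R ^ i - R) := by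
  rcases i with _ | j
  · omega
  · have h1 : R ^ (j+1) - R = R * (R ^ j - 1) := by
      rw [Nat.mul_sub, mul_one, pow_succ, mul_comm]
    rw [h1]
    have := Nat.sub_dvd_pow_sub_pow R 1 j
    simp only [one_pow] at this
    exact this.mul_left R

lemma q_succ (R i : ℕ) (hR : 2 ≤ R) (hi : 1 ≤ i) :
    (R ^ (i+1) - R) / (R - 1) = (R ^ i - R) / (R - 1) + R ^ i := by
  have hRpos : 0 < R - 1 := by omega
  have hge : R ≤ R ^ i := Nat.le_self_pow (by omega) R
  have hmul : R ^ (i+1) = R ^ i * R := by ring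
  have h1 : R ^ (i+1) - R = (R ^ i - R) + R ^ i * (R - 1) := by
    rw [Nat.mul_sub, mul_one, ← hmul]
    have hge2 : R ^ i ≤ R ^ (i+1) := Nat.pow_le_pow_right (by omega) (by omega)
    omega
  rw [h1, Nat.add_mul_div_right _ _ hRpos]

lemma q_ge (R i : ℕ) (hR : 2 ≤ R) (hi : 2 ≤ i) :
    R ^ (i - 1) ≤ (R ^ i - R) / (R - 1) := by
  rw [Nat.le_div_iff_mul_le (by omega)]
  have hmul : R ^ (i-1) * R = R ^ i := by
    rw [← pow_succ]; congr 1; omega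
  have h1 : R ^ (i-1) * (R - 1) = R ^ i - R ^ (i-1) := by
    rw [Nat.mul_sub, mul_one, hmul]
  have h2 : R ≤ R ^ (i-1) := Nat.le_self_pow (by omega) R
  have h3 : R ^ (i-1) ≤ R ^ i := Nat.pow_le_pow_right (by omega) (by omega)
  omega

lemma card_Block (R i : ℕ) (hR : 2 ≤ R) (hi : 1 ≤ i) : (Block R i).card = R ^ i := by
  rw [Block, Nat.card_Icc, q_succ R i hR hi]
  omega

namespace ExplicitConstruction
variable (E : ExplicitConstruction)

lemma R_ge : 9 ≤ E.R := by
  have hε := E.hε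
  have h8 : (8:ℝ) < 8 / E.ε := by
    rw [lt_div_iff₀ hε.1]
    nlinarith [hε.1, hε.2]
  have : (8:ℝ) < (E.R : ℝ) := h8.trans E.hR
  have : (8:ℕ) < E.R := by exact_mod_cast this
  omega

lemma Mfun_pos (i : ℕ) (hi : 1 ≤ i) : 1 ≤ Mfun E.ε i := by
  have h1 : (1:ℝ) ≤ (i:ℝ) ^ (1 - E.ε) :=
    Real.one_le_rpow (by exact_mod_cast hi) (by linarith [E.hε.2])
  exact Nat.one_le_ceil_iff.mpr (by linarith)

lemma Mfun_le (i : ℕ) (hi : 1 ≤ i) : Mfun E.ε i ≤ i := by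
  rw [Mfun, Nat.ceil_le]
  calc (i:ℝ) ^ (1 - E.ε) ≤ (i:ℝ) ^ (1:ℝ) :=
        Real.rpow_le_rpow_of_exponent_le (by exact_mod_cast hi) (by linarith [E.hε.1])
    _ = i := Real.rpow_one _

lemma sub_subset (i m : ℕ) (hi : 1 ≤ i) (hm : m ∈ Finset.Icc 1 (Mfun E.ε i)) :
    E.sub i m ⊆ Block E.R i := by
  rw [E.hpart i hi]
  exact Finset.subset_biUnion_of_mem _ hm

lemma idx_exists (i k : ℕ) (hi : 1 ≤ i) (hk : k ∈ Block E.R i) :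
    ∃ m ∈ Finset.Icc 1 (Mfun E.ε i), k ∈ E.sub i m := by
  rw [E.hpart i hi] at hk
  simpa using Finset.mem_biUnion.mp hk

lemma idx_unique (i k m m' : ℕ) (hi : 1 ≤ i) (hm : m ∈ Finset.Icc 1 (Mfun E.ε i))
    (hm' : m' ∈ Finset.Icc 1 (Mfun E.ε i)) (h1 : k ∈ E.sub i m) (h2 : k ∈ E.sub i m') :
    m = m' := by
  rcases lt_trichotomy m m' with h | h | h
  · exact absurd (E.horder i hi m hm m' hm' h k h1 k h2) (lt_irrefl k)
  · exact h
  · exact absurd (E.horder i hi m' hm' m hm h k h2 k h1) (lt_irrefl k)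

lemma card_sub_ge (i m r' : ℕ) (hr' : 1 ≤ r') (hi : r' + 2 ≤ i)
    (hm : m ∈ Finset.Icc 1 (Mfun E.ε i)) : r' + 1 ≤ (E.sub i m).card := by
  have hi1 : 1 ≤ i := by omega
  have hM1 : 1 ≤ Mfun E.ε i := E.Mfun_pos i hi1
  have hMi : Mfun E.ε i ≤ i := E.Mfun_le i hi1
  have hcd := abs_le.mp (E.hcard i hi1 m hm)
  have hipos : (0:ℝ) < (i:ℝ) := by exact_mod_cast hi1
  have hMpos : (0:ℝ) < (Mfun E.ε i : ℝ) := by exact_mod_cast hM1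
  have hRpow : (i * (r' + 2) : ℕ) ≤ E.R ^ i := by
    calc i * (r' + 2) ≤ i * i := Nat.mul_le_mul_left _ (by omega)
      _ = i ^ 2 := (sq i).symm
      _ ≤ 9 ^ i := sq_le_ninepow i
      _ ≤ E.R ^ i := Nat.pow_le_pow_left E.R_ge i
  have h1 : (E.R : ℝ) ^ i / (i : ℝ) ≤ (E.R : ℝ) ^ i / (Mfun E.ε i : ℝ) := by
    apply div_le_div_of_nonneg_left (by positivity) hMpos
    exact_mod_cast hMi
  have h2 : ((r':ℝ) + 2) ≤ (E.R : ℝ) ^ i / (i : ℝ) := by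
    rw [le_div_iff₀ hipos]
    have : ((i * (r' + 2) : ℕ) : ℝ) ≤ ((E.R ^ i : ℕ) : ℝ) := by exact_mod_cast hRpow
    push_cast at this
    linarith
  have h3 : (r':ℝ) + 1 ≤ ((E.sub i m).card : ℝ) := by linarith [hcd.1]
  exact_mod_cast h3

lemma core (E : ExplicitConstruction) (a b r' i m : ℕ) (hb : 1 ≤ b) (hr' : 1 ≤ r')
    (hab : a = b * 2 ^ r') (hi : r' + 2 ≤ i) (hm : m ∈ Finset.Icc 1 (Mfun E.ε i)) :
    (E.sub i m).card ≤ ((Block E.R i ×ˢ Block E.R i).filter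
        (fun p => (a:ℤ) * E.n p.1 - (b:ℤ) * E.n p.2
          = 2 ^ 2 ^ i ^ 4 * m * ((a:ℤ) - (b:ℤ)))).card + r'
    ∧ ((Block E.R i ×ˢ Block E.R i).filter
        (fun p => (a:ℤ) * E.n p.1 - (b:ℤ) * E.n p.2
          = 2 ^ 2 ^ i ^ 4 * m * ((a:ℤ) - (b:ℤ)))).card
      ≤ (E.sub i m).card + r' * Mfun E.ε i := by
  classical
  have hi1 : 1 ≤ i := by omega
  set M := Mfun E.ε i with hMdef
  set T : ℕ := 2 ^ i ^ 4 with hTdef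
  set q : ℕ := (E.R ^ i - E.R) / (E.R - 1) with hqdef
  set F : Finset (ℕ × ℕ) := (Block E.R i ×ˢ Block E.R i).filter
        (fun p => (a:ℤ) * E.n p.1 - (b:ℤ) * E.n p.2
          = 2 ^ T * m * ((a:ℤ) - (b:ℤ))) with hFdef
  have hRg : 9 ≤ E.R := E.R_ge
  have hM1 : 1 ≤ M := E.Mfun_pos i hi1
  have hMi : M ≤ i := E.Mfun_le i hi1
  obtain ⟨hm1, hmM⟩ := Finset.mem_Icc.mp hm
  obtain ⟨lo, hh, hsub⟩ := E.hconsec i hi1 m hm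
  have hcsub : r' + 1 ≤ (E.sub i m).card := E.card_sub_ge i m r' hr' hi hm
  have hcard_eq : (E.sub i m).card = hh + 1 - lo := by rw [hsub, Nat.card_Icc]
  have hlohh : lo + r' ≤ hh := by omega
  -- lower bound on q
  have hq_ge : i + r' + 1 ≤ q := by
    have hA : E.R ^ (i-1) ≤ q := q_ge E.R i (by omega) (by omega)
    have hB : (9:ℕ) ^ (i-1) ≤ E.R ^ (i-1) := Nat.pow_le_pow_left hRg _
    have hC : (i - 2) + 1 ≤ 9 ^ (i-2) :=
      le_trans (succ_le_threepow (i-2)) (Nat.pow_le_pow_left (by norm_num) _)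
    have hD : (9:ℕ) ^ (i-1) = 9 ^ (i-2) * 9 := by
      rw [← pow_succ]; congr 1; omega
    have : 9 * (i - 1) ≤ 9 ^ (i - 1) := by
      rw [hD]; calc 9 * (i-1) = ((i-2)+1) * 9 := by ring_nf; omega
        _ ≤ 9 ^ (i-2) * 9 := Nat.mul_le_mul_right _ hC
    omega
  have hq_lb : ∀ k ∈ Block E.R i, q + 1 ≤ k := fun k hk => (Finset.mem_Icc.mp hk).1
  -- index + n-value helper
  have hnval : ∀ k ∈ Block E.R i, ∃ mk, mk ∈ Finset.Icc 1 M ∧ k ∈ E.sub i mk ∧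
      E.n k = 2 ^ T * (2 ^ k + mk) := by
    intro k hk
    obtain ⟨mk, hmk, hkmk⟩ := E.idx_exists i k hi1 hk
    exact ⟨mk, hmk, hkmk, E.hn i hi1 mk hmk k hkmk⟩
  -- PART 1 : lower bound
  set K : Finset ℕ := Finset.Icc lo (hh - r') with hKdef
  have hKcard : K.card + r' = (E.sub i m).card := by
    rw [hKdef, Nat.card_Icc]; omega
  have himg : K.image (fun k => (k, k + r')) ⊆ F := by
    intro p hp
    obtain ⟨k, hk, rfl⟩ := Finset.mem_image.mp hp
    rw [Finset.mem_Icc] at hk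
    have hk1 : k ∈ E.sub i m := by rw [hsub, Finset.mem_Icc]; omega
    have hk2 : k + r' ∈ E.sub i m := by rw [hsub, Finset.mem_Icc]; omega
    rw [hFdef, Finset.mem_filter, Finset.mem_product]
    refine ⟨⟨E.sub_subset i m hi1 hm hk1, E.sub_subset i m hi1 hm hk2⟩, ?_⟩
    rw [E.hn i hi1 m hm k hk1, E.hn i hi1 m hm _ hk2]
    push_cast [hab]
    ring
  have hlow : (E.sub i m).card ≤ F.card + r' := by
    have h1 : K.card = (K.image (fun k => (k, k + r'))).card :=
      (Finset.card_image_of_injective _ (fun x y h => by simpa using (Prod.ext_iff.mp h).1)).symm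
    have h2 : (K.image (fun k => (k, k + r'))).card ≤ F.card := Finset.card_le_card himg
    omega
  -- forcing : every solution has p.2 = p.1 + r'
  have hforce : ∀ p ∈ F, (p.2 = p.1 + r') ∧
      ∀ m₁ m₂ : ℕ, m₁ ∈ Finset.Icc 1 M → m₂ ∈ Finset.Icc 1 M →
        p.1 ∈ E.sub i m₁ → p.2 ∈ E.sub i m₂ →
        (2:ℤ)^(p.1 + r') - 2^(p.2) = 2^r' * ((m:ℤ) - m₁) + ((m₂:ℤ) - m) := by
    intro p hp
    obtain ⟨k, l⟩ := p
    rw [hFdef, Finset.mem_filter, Finset.mem_product] at hp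
    obtain ⟨⟨hkB, hlB⟩, heq⟩ := hp
    simp only at heq ⊢
    -- generic key equation
    have key : ∀ m₁ m₂ : ℕ, m₁ ∈ Finset.Icc 1 M → m₂ ∈ Finset.Icc 1 M →
        k ∈ E.sub i m₁ → l ∈ E.sub i m₂ →
        (2:ℤ)^(k + r') - 2^l = 2^r' * ((m:ℤ) - m₁) + ((m₂:ℤ) - m) := by
      intro m₁ m₂ hm₁ hm₂ hk1 hl2
      have hn1 := E.hn i hi1 m₁ hm₁ k hk1
      have hn2 := E.hn i hi1 m₂ hm₂ l hl2
      rw [hn1, hn2] at heq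
      have hbT : ((b:ℤ) * 2 ^ T) ≠ 0 := by positivity
      have h0 : ((b:ℤ) * 2 ^ T) * (((2:ℤ)^(k + r') - 2^l)
          - (2^r' * ((m:ℤ) - m₁) + ((m₂:ℤ) - m))) = 0 := by
        push_cast [hab] at heq ⊢
        linear_combination heq
      have := (mul_eq_zero.mp h0).resolve_left hbT
      linarith [sub_eq_zero.mp this]
    obtain ⟨m₁, hm₁, hk1, hn1⟩ := hnval k hkB
    obtain ⟨m₂, hm₂, hl2, hn2⟩ := hnval l hlB
    have hkey := key m₁ m₂ hm₁ hm₂ hk1 hl2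
    -- bound the RHS
    have hm₁b := Finset.mem_Icc.mp hm₁
    have hm₂b := Finset.mem_Icc.mp hm₂
    have hMle : (M:ℤ) ≤ 2 ^ i := by
      have : M < 2 ^ i := lt_of_le_of_lt hMi (Nat.lt_two_pow_self)
      exact_mod_cast this.le
    have hpow_r : (0:ℤ) < 2 ^ r' := by positivity
    have hDub : 2^r' * ((m:ℤ) - m₁) + ((m₂:ℤ) - m) ≤ 2 ^ q := by
      have e1 : 2^r' * ((m:ℤ) - m₁) ≤ 2^r' * M := by
        apply mul_le_mul_of_nonneg_left _ hpow_r.le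
        have : (1:ℤ) ≤ m₁ := by exact_mod_cast hm₁b.1
        have : (m:ℤ) ≤ M := by exact_mod_cast hmM
        omega
      have e2 : ((m₂:ℤ) - m) ≤ M := by
        have : (m₂:ℤ) ≤ M := by exact_mod_cast hm₂b.2
        have : (1:ℤ) ≤ m := by exact_mod_cast hm1
        omega
      have e3 : (2:ℤ)^r' * M + M ≤ 2 ^ (i + r' + 1) := by
        have f1 : (2:ℤ)^r' * M ≤ 2^r' * 2^i :=
          mul_le_mul_of_nonneg_left hMle hpow_r.le
        have f2 : (M:ℤ) ≤ 2^r' * 2^i := by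
          calc (M:ℤ) ≤ 2^i := hMle
            _ ≤ 2^r' * 2^i := le_mul_of_one_le_left (by positivity) (one_le_pow₀ one_le_two)
        calc (2:ℤ)^r' * M + M ≤ 2^r' * 2^i + 2^r' * 2^i := by linarith
          _ = 2 ^ (i + r' + 1) := by ring
      have e4 : (2:ℤ) ^ (i + r' + 1) ≤ 2 ^ q := pow_le_pow_right₀ one_le_two hq_ge
      linarith
    have hDlb : -(2 ^ q) ≤ 2^r' * ((m:ℤ) - m₁) + ((m₂:ℤ) - m) := by
      have e1 : -(2^r' * (M:ℤ)) ≤ 2^r' * ((m:ℤ) - m₁) := by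
        rw [← mul_neg]
        apply mul_le_mul_of_nonneg_left _ hpow_r.le
        have : (m₁:ℤ) ≤ M := by exact_mod_cast hm₁b.2
        have : (1:ℤ) ≤ m := by exact_mod_cast hm1
        omega
      have e2 : -(M:ℤ) ≤ ((m₂:ℤ) - m) := by
        have : (1:ℤ) ≤ m₂ := by exact_mod_cast hm₂b.1
        have : (m:ℤ) ≤ M := by exact_mod_cast hmM
        omega
      have e3 : (2:ℤ)^r' * M + M ≤ 2 ^ q := by
        have f1 : (2:ℤ)^r' * M ≤ 2^r' * 2^i :=
          mul_le_mul_of_nonneg_left hMle hpow_r.le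
        have f2 : (M:ℤ) ≤ 2^r' * 2^i := by
          calc (M:ℤ) ≤ 2^i := hMle
            _ ≤ 2^r' * 2^i := le_mul_of_one_le_left (by positivity) (one_le_pow₀ one_le_two)
        have e4 : (2:ℤ) ^ (i + r' + 1) ≤ 2 ^ q := pow_le_pow_right₀ one_le_two hq_ge
        have : (2:ℤ)^r' * M + M ≤ 2 ^ (i+r'+1) := by
          calc (2:ℤ)^r' * M + M ≤ 2^r' * 2^i + 2^r' * 2^i := by linarith
            _ = 2 ^ (i + r' + 1) := by ring
        linarith
      linarith
    -- now trichotomy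
    have hl_eq : l = k + r' := by
      rcases lt_trichotomy l (k + r') with h | h | h
      · exfalso
        have h1 : (2:ℤ)^(l+1) ≤ 2^(k + r') := pow_le_pow_right₀ one_le_two (by omega)
        have h2 : (2:ℤ)^(q+1) ≤ 2^l := pow_le_pow_right₀ one_le_two (hq_lb l hlB)
        have h3 : (2:ℤ)^(q+1) = 2 * 2^q := by ring
        have h4 : (2:ℤ)^(l+1) = 2 * 2^l := by ring
        have h5 : (0:ℤ) < 2^q := by positivity
        linarith [hkey]
      · exact h
      · exfalso
        have h1 : (2:ℤ)^(k+r'+1) ≤ 2^l := pow_le_pow_right₀ one_le_two (by omega)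
        have h2 : (2:ℤ)^(q+1) ≤ 2^(k+r') := by
          apply pow_le_pow_right₀ one_le_two
          have := hq_lb k hkB
          omega
        have h3 : (2:ℤ)^(q+1) = 2 * 2^q := by ring
        have h4 : (2:ℤ)^(k+r'+1) = 2 * 2^(k+r') := by ring
        have h5 : (0:ℤ) < 2^q := by positivity
        linarith [hkey]
    exact ⟨hl_eq, key⟩
  -- PART 2 : upper bound
  set Bad : Finset ℕ := (Finset.Icc 1 M).biUnion
      (fun m' => (E.sub i m').filter (fun k => k + r' ∉ E.sub i m')) with hBdef
  have himg2 : F.image Prod.fst ⊆ K ∪ Bad := by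
    intro k hk
    obtain ⟨p, hp, rfl⟩ := Finset.mem_image.mp hk
    obtain ⟨hl_eq, hkeyf⟩ := hforce p hp
    obtain ⟨⟨hkB, hlB⟩, -⟩ := by
      rw [hFdef, Finset.mem_filter, Finset.mem_product] at hp
      exact hp
    obtain ⟨m₁, hm₁, hk1, -⟩ := hnval p.1 hkB
    by_cases hc : p.1 + r' ∈ E.sub i m₁
    · -- both in sub m₁ : deduce m₁ = m
      have hl2 : p.2 ∈ E.sub i m₁ := by rw [hl_eq]; exact hc
      have hkey := hkeyf m₁ m₁ hm₁ hm₁ hk1 hl2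
      rw [hl_eq] at hkey
      have h0 : ((m:ℤ) - m₁) * (2^r' - 1) = 0 := by linear_combination -hkey
      have h1 : ((2:ℤ)^r' - 1) ≠ 0 := by
        have : (2:ℤ) ≤ 2 ^ r' := by
          calc (2:ℤ) = 2^1 := (pow_one 2).symm
            _ ≤ 2^r' := pow_le_pow_right₀ one_le_two hr'
        omega
      have h2 : (m:ℤ) = m₁ := by
        have := (mul_eq_zero.mp h0).resolve_right h1
        linarith
      have hmm₁ : m = m₁ := by exact_mod_cast h2
      subst hmm₁
      apply Finset.mem_union_left
      rw [hsub, Finset.mem_Icc] at hk1 hc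
      rw [hKdef, Finset.mem_Icc]
      omega
    · apply Finset.mem_union_right
      rw [hBdef]
      exact Finset.mem_biUnion.mpr ⟨m₁, hm₁, Finset.mem_filter.mpr ⟨hk1, hc⟩⟩
  have hBadcard : Bad.card ≤ M * r' := by
    rw [hBdef]
    calc ((Finset.Icc 1 M).biUnion _).card
        ≤ ∑ m' ∈ Finset.Icc 1 M, ((E.sub i m').filter (fun k => k + r' ∉ E.sub i m')).card :=
          Finset.card_biUnion_le
      _ ≤ ∑ _m' ∈ Finset.Icc 1 M, r' := by
          apply Finset.sum_le_sum
          intro m' hm'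
          obtain ⟨lo', hh', hsub'⟩ := E.hconsec i hi1 m' hm'
          have hss : (E.sub i m').filter (fun k => k + r' ∉ E.sub i m')
              ⊆ Finset.Icc (hh' + 1 - r') hh' := by
            intro k hk
            obtain ⟨hk1, hk2⟩ := Finset.mem_filter.mp hk
            rw [hsub', Finset.mem_Icc] at hk1 hk2
            rw [Finset.mem_Icc]
            omega
          calc ((E.sub i m').filter (fun k => k + r' ∉ E.sub i m')).card
              ≤ (Finset.Icc (hh' + 1 - r') hh').card := Finset.card_le_card hss
            _ ≤ r' := by rw [Nat.card_Icc]; omega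
      _ = M * r' := by rw [Finset.sum_const, Nat.card_Icc, smul_eq_mul, Nat.add_sub_cancel]
  have hup : F.card ≤ (E.sub i m).card + r' * M := by
    have h1 : F.card = (F.image Prod.fst).card := by
      rw [Finset.card_image_of_injOn]
      intro p hp p' hp' hfst
      have e1 := (hforce p hp).1
      have e2 := (hforce p' hp').1
      exact Prod.ext hfst (by rw [e1, e2, hfst])
    have h2 : (F.image Prod.fst).card ≤ K.card + Bad.card :=
      le_trans (Finset.card_le_card himg2) (Finset.card_union_le _ _)
    have := Nat.mul_comm r' M
    omega
  exact ⟨hlow, hup⟩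
end ExplicitConstruction
open ExplicitConstruction

/-- Lemma 2.1 (iii)(a): if `a/b = 2^r` with `r ≠ 0` and
`c = 2^(2^(i^4)) b m (2^r - 1)` for some `m ∈ {1, …, M(i)}`, then the number of solutions
`k, ℓ ∈ Δ_i` of `a n_k - b n_ℓ = c` equals `R^i/⌈i^(1-ε)⌉ - r` up to an error `O(i²)`. -/
theorem statement3 (E : ExplicitConstruction) (a b : ℕ) (ha : 1 ≤ a) (hb : 1 ≤ b)
    (r : ℤ) (hr : r ≠ 0) (hpow : (a : ℝ) / (b : ℝ) = (2:ℝ) ^ r) :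
    ∃ C : ℝ, ∀ i : ℕ, 1 ≤ i → ∀ m ∈ Finset.Icc 1 (Mfun E.ε i),
      |(({p : ℕ × ℕ | p.1 ∈ Block E.R i ∧ p.2 ∈ Block E.R i ∧
            (a : ℝ) * (E.n p.1 : ℝ) - (b : ℝ) * (E.n p.2 : ℝ)
              = (2:ℝ) ^ 2 ^ i ^ 4 * b * m * ((2:ℝ) ^ r - 1)}.ncard : ℝ)
          - ((E.R : ℝ) ^ i / (Mfun E.ε i : ℝ) - (r : ℝ)))| ≤ C * (i : ℝ) ^ 2 := by
  classical
  have hb0 : (b:ℝ) ≠ 0 := by positivity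
  have ha0 : (a:ℝ) ≠ 0 := by positivity
  have habr : (a:ℝ) = (b:ℝ) * (2:ℝ) ^ r := by
    field_simp at hpow
    linarith [hpow]
  set r' : ℕ := r.natAbs with hr'def
  have hr'1 : 1 ≤ r' := Int.natAbs_pos.mpr hr
  have hrabs : |(r:ℝ)| = (r' : ℝ) := by
    rw [hr'def, Nat.cast_natAbs, Int.cast_abs]
  have hrub : (r:ℝ) ≤ r' := le_trans (le_abs_self _) (le_of_eq hrabs)
  have hrlb : -(r':ℝ) ≤ r := by
    have := neg_abs_le ((r:ℤ):ℝ)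
    rw [hrabs] at this
    exact this
  set C : ℝ := (E.R:ℝ)^(2*(r'+1)) + (E.R:ℝ)^(r'+1) + 3*(r':ℝ) + 2 with hCdef
  have hRg : 9 ≤ E.R := E.R_ge
  have hR1 : (1:ℝ) ≤ (E.R:ℝ) := by
    have : (9:ℝ) ≤ (E.R:ℝ) := by exact_mod_cast hRg
    linarith
  have hC1 : (2*(r':ℝ)+1) ≤ C := by
    have p1 : (0:ℝ) ≤ (E.R:ℝ)^(2*(r'+1)) := by positivity
    have p2 : (0:ℝ) ≤ (E.R:ℝ)^(r'+1) := by positivity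
    have p3 : (0:ℝ) ≤ (r':ℝ) := by positivity
    rw [hCdef]; linarith
  have hC0 : (0:ℝ) ≤ C := by
    have : (0:ℝ) ≤ (r':ℝ) := by positivity
    linarith
  refine ⟨C, ?_⟩
  intro i hi1 m hm
  set M := Mfun E.ε i with hMdef
  have hM1 : 1 ≤ M := E.Mfun_pos i hi1
  have hMi : M ≤ i := E.Mfun_le i hi1
  obtain ⟨hm1, hmM⟩ := Finset.mem_Icc.mp hm
  -- reduce the set to a Finset with integer condition
  set Fset : Finset (ℕ × ℕ) := (Block E.R i ×ˢ Block E.R i).filter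
      (fun p => (a:ℤ) * E.n p.1 - (b:ℤ) * E.n p.2
        = 2 ^ 2 ^ i ^ 4 * m * ((a:ℤ) - (b:ℤ))) with hFdef
  have hba2 : (b:ℝ) * (2:ℝ)^r = a := by rw [habr]
  have hrhs : (2:ℝ) ^ 2 ^ i ^ 4 * b * m * ((2:ℝ) ^ r - 1)
      = 2 ^ 2 ^ i ^ 4 * m * ((a:ℝ) - b) := by
    linear_combination ((2:ℝ) ^ 2 ^ i ^ 4 * m) * hba2
  have hsetF : {p : ℕ × ℕ | p.1 ∈ Block E.R i ∧ p.2 ∈ Block E.R i ∧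
      (a : ℝ) * (E.n p.1 : ℝ) - (b : ℝ) * (E.n p.2 : ℝ)
        = (2:ℝ) ^ 2 ^ i ^ 4 * b * m * ((2:ℝ) ^ r - 1)} = (Fset : Set (ℕ × ℕ)) := by
    ext p
    simp only [Set.mem_setOf_eq, hFdef, Finset.coe_filter, Finset.mem_product,
      Finset.mem_coe, Finset.mem_filter]
    rw [hrhs]
    constructor
    · rintro ⟨h1, h2, h3⟩
      refine ⟨⟨h1, h2⟩, ?_⟩
      exact_mod_cast h3
    · rintro ⟨⟨h1, h2⟩, h3⟩
      refine ⟨h1, h2, ?_⟩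
      exact_mod_cast h3
  have hncard : ({p : ℕ × ℕ | p.1 ∈ Block E.R i ∧ p.2 ∈ Block E.R i ∧
      (a : ℝ) * (E.n p.1 : ℝ) - (b : ℝ) * (E.n p.2 : ℝ)
        = (2:ℝ) ^ 2 ^ i ^ 4 * b * m * ((2:ℝ) ^ r - 1)}.ncard : ℝ) = (Fset.card : ℝ) := by
    rw [hsetF, Set.ncard_coe_finset]
  rw [hncard]
  -- case split on size of i
  by_cases hbig : r' + 2 ≤ i
  · -- large i : use the core lemma
    have hkey : (E.sub i m).card ≤ Fset.card + r' ∧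
        Fset.card ≤ (E.sub i m).card + r' * M := by
      rcases lt_or_gt_of_ne hr with hneg | hpos
      · -- r < 0 : swap
        have hrr : (r:ℤ) = -(r' : ℤ) := by
          rw [hr'def]; omega
        have h2r : (2:ℝ)^r = ((2:ℝ)^(r':ℕ))⁻¹ := by
          rw [← zpow_natCast (2:ℝ) r', ← zpow_neg, hrr]
        have hbeq : (b:ℝ) = (a:ℝ) * 2^(r':ℕ) := by
          rw [habr, h2r]
          field_simp
        have hbnat : b = a * 2^r' := by
          have : (b:ℝ) = ((a * 2^r' : ℕ) : ℝ) := by push_cast; exact hbeq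
          exact_mod_cast this
        set Fset' : Finset (ℕ × ℕ) := (Block E.R i ×ˢ Block E.R i).filter
            (fun p => (b:ℤ) * E.n p.1 - (a:ℤ) * E.n p.2
              = 2 ^ 2 ^ i ^ 4 * m * ((b:ℤ) - (a:ℤ))) with hF'def
        have hcardswap : Fset.card = Fset'.card := by
          refine Finset.card_bij' (fun p _ => p.swap) (fun p _ => p.swap) ?_ ?_
            (fun p _ => Prod.swap_swap p) (fun p _ => Prod.swap_swap p)
          · intro p hp
            rw [hFdef, Finset.mem_filter, Finset.mem_product] at hp
            rw [hF'def, Finset.mem_filter, Finset.mem_product]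
            obtain ⟨⟨h1, h2⟩, h3⟩ := hp
            exact ⟨⟨h2, h1⟩, by simp only [Prod.fst_swap, Prod.snd_swap]; linear_combination -h3⟩
          · intro p hp
            rw [hF'def, Finset.mem_filter, Finset.mem_product] at hp
            rw [hFdef, Finset.mem_filter, Finset.mem_product]
            obtain ⟨⟨h1, h2⟩, h3⟩ := hp
            exact ⟨⟨h2, h1⟩, by simp only [Prod.fst_swap, Prod.snd_swap]; linear_combination -h3⟩
        have := core E b a r' i m ha hr'1 hbnat hbig hm
        rw [hcardswap]
        exact this
      · -- r > 0
        have hrr : (r:ℤ) = (r' : ℤ) := by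
          rw [hr'def]; omega
        have h2r : (2:ℝ)^r = (2:ℝ)^(r':ℕ) := by
          rw [← zpow_natCast (2:ℝ) r', hrr]
        have haeq : (a:ℝ) = (b:ℝ) * 2^(r':ℕ) := by rw [habr, h2r]
        have hanat : a = b * 2^r' := by
          have : (a:ℝ) = ((b * 2^r' : ℕ) : ℝ) := by push_cast; exact haeq
          exact_mod_cast this
        exact core E a b r' i m hb hr'1 hanat hbig hm
    obtain ⟨hlow, hup⟩ := hkey
    have hcd := abs_le.mp (E.hcard i hi1 m hm)
    have hlowR : ((E.sub i m).card : ℝ) ≤ (Fset.card : ℝ) + r' := by exact_mod_cast hlow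
    have hupR : (Fset.card : ℝ) ≤ ((E.sub i m).card : ℝ) + r' * M := by exact_mod_cast hup
    have hiR : (1:ℝ) ≤ (i:ℝ) := by exact_mod_cast hi1
    have hMiR : (M:ℝ) ≤ (i:ℝ) := by exact_mod_cast hMi
    have habs : |(Fset.card : ℝ) - ((E.R : ℝ) ^ i / (M : ℝ) - (r : ℝ))|
        ≤ (2*(r':ℝ)+1) * i := by
      rw [abs_le]
      constructor
      · have : (r':ℝ) * M ≤ r' * i := by
          apply mul_le_mul_of_nonneg_left hMiR (by positivity)
        nlinarith [hcd.1, hcd.2]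
      · have : (r':ℝ) * M ≤ r' * i := by
          apply mul_le_mul_of_nonneg_left hMiR (by positivity)
        nlinarith [hcd.1, hcd.2]
    calc |(Fset.card : ℝ) - ((E.R : ℝ) ^ i / (M : ℝ) - (r : ℝ))|
        ≤ (2*(r':ℝ)+1) * i := habs
      _ ≤ C * (i:ℝ) := mul_le_mul_of_nonneg_right hC1 (by positivity)
      _ ≤ C * (i:ℝ)^2 := by
          apply mul_le_mul_of_nonneg_left _ hC0
          nlinarith [hiR]
  · -- small i : crude bound
    push_neg at hbig
    have hcardF : Fset.card ≤ E.R ^ i * E.R ^ i := by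
      calc Fset.card ≤ (Block E.R i ×ˢ Block E.R i).card := Finset.card_filter_le _ _
        _ = E.R ^ i * E.R ^ i := by
            rw [Finset.card_product, card_Block E.R i (by omega) hi1]
    have hFR : (Fset.card : ℝ) ≤ (E.R:ℝ) ^ (2*i) := by
      have : ((Fset.card : ℕ) : ℝ) ≤ ((E.R ^ i * E.R ^ i : ℕ) : ℝ) := by exact_mod_cast hcardF
      push_cast at this
      calc (Fset.card : ℝ) ≤ (E.R:ℝ)^i * (E.R:ℝ)^i := this
        _ = (E.R:ℝ) ^ (2*i) := by ring
    have hpow1 : (E.R:ℝ) ^ (2*i) ≤ (E.R:ℝ) ^ (2*(r'+1)) :=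
      pow_le_pow_right₀ hR1 (by omega)
    have hdivub : (E.R : ℝ) ^ i / (M : ℝ) ≤ (E.R:ℝ) ^ (r'+1) := by
      have h1 : (E.R : ℝ) ^ i / (M : ℝ) ≤ (E.R : ℝ) ^ i := by
        apply div_le_self (by positivity)
        exact_mod_cast hM1
      have h2 : (E.R : ℝ) ^ i ≤ (E.R:ℝ) ^ (r'+1) := pow_le_pow_right₀ hR1 (by omega)
      linarith
    have hdivlb : (0:ℝ) ≤ (E.R : ℝ) ^ i / (M : ℝ) := by positivity
    have hFlb : (0:ℝ) ≤ (Fset.card : ℝ) := Nat.cast_nonneg _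
    have hiR : (1:ℝ) ≤ (i:ℝ) := by exact_mod_cast hi1
    have hCbound : |(Fset.card : ℝ) - ((E.R : ℝ) ^ i / (M : ℝ) - (r : ℝ))| ≤ C := by
      rw [abs_le, hCdef]
      constructor
      · nlinarith
      · nlinarith
    calc |(Fset.card : ℝ) - ((E.R : ℝ) ^ i / (M : ℝ) - (r : ℝ))| ≤ C := hCbound
      _ = C * 1 := by ring
      _ ≤ C * (i:ℝ)^2 := by
          apply mul_le_mul_of_nonneg_left _ hC0
          nlinarith [hiR]
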